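/- Let m, n ≥ 1 and let d ≥ 4 be even. For (a, b), (a', b') ∈ R^{2m+2−d} ⊕ R^{2n+2−d}, the deformations (R̃_{a,b}, t, j) and (R̃_{a',b'}, t, j) of R = F[u,v]/(u^{m+1}, v^{n+1}) are isomorphic as deformations of R if and only if (a, b) = (a', b'). -/

import Mathlib

/-- A finite-dimensional graded-commutative ℤ-graded `F`-algebra
("graded F-algebra" in the sense of Seidel's paper). -/
structure GradedFAlg (F : Type) [Field F] where
  carrier : Type
  [ring : Ring carrier]
  [alg : Algebra F carrier]
  grading : ℤ → Submodule F carrier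
  [gradedAlgebra : GradedAlgebra grading]
  [findim : FiniteDimensional F carrier]
  gcomm : ∀ (i j : ℤ) (x y : carrier), x ∈ grading i → y ∈ grading j →
    x * y = ((-1 : F) ^ (i * j)) • (y * x)

attribute [instance] GradedFAlg.ring GradedFAlg.alg GradedFAlg.gradedAlgebra GradedFAlg.findim

variable {F : Type} [Field F]

/-- A homomorphism of graded `F`-algebras. -/
structure GradedFAlg.Hom (A B : GradedFAlg F) where
  toAlgHom : A.carrier →ₐ[F] B.carrier
  graded : ∀ (i : ℤ) (x : A.carrier), x ∈ A.grading i → toAlgHom x ∈ B.grading i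

/-- The identity homomorphism of graded `F`-algebras. -/
def GradedFAlg.Hom.id (A : GradedFAlg F) : GradedFAlg.Hom A A :=
  ⟨AlgHom.id F A.carrier, fun _ _ h => h⟩

/-- A `d`-dimensional (first order infinitesimal) deformation `(R̃, t, j)` of `A`:
`t ∈ R̃^d` with `t² = 0` whose annihilator is exactly `t·R̃`, and `j : R̃ → A`
a surjective homomorphism of graded algebras with kernel `t·R̃`. -/
structure Deformation (F : Type) [Field F] (A : GradedFAlg F) (d : ℤ) where
  alg : GradedFAlg F
  t : alg.carrier
  t_mem : t ∈ alg.grading d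
  t_sq : t * t = 0
  t_ann : ∀ x : alg.carrier, t * x = 0 ↔ ∃ y : alg.carrier, x = t * y
  j : GradedFAlg.Hom alg A
  j_surj : Function.Surjective j.toAlgHom
  j_ker : ∀ x : alg.carrier, j.toAlgHom x = 0 ↔ ∃ y : alg.carrier, x = t * y

/-- A morphism of deformations over a homomorphism `f` of graded `F`-algebras. -/
structure DefMorphismOver {A B : GradedFAlg F} (f : GradedFAlg.Hom A B) {d : ℤ}
    (D1 : Deformation F A d) (D2 : Deformation F B d) where
  toHom : GradedFAlg.Hom D1.alg D2.alg
  map_t : toHom.toAlgHom D1.t = D2.t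
  over_id : ∀ x, D2.j.toAlgHom (toHom.toAlgHom x) = f.toAlgHom (D1.j.toAlgHom x)

/-- Two deformations of `A` are isomorphic if there is a bijective morphism of
deformations (i.e. a morphism over the identity of `A`) between them. -/
def Deformation.Iso {A : GradedFAlg F} {d : ℤ} (D1 D2 : Deformation F A d) : Prop :=
  ∃ φ : DefMorphismOver (GradedFAlg.Hom.id A) D1 D2, Function.Bijective φ.toHom.toAlgHom

/-- `R` is (a model of) the cohomology `F[u,v]/(u^{m+1}, v^{n+1})` of
`ℂPᵐ × ℂPⁿ`: `u, v` have degree `2`, `u^{m+1} = v^{n+1} = 0`, and the monomials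
`uⁱvʲ` (`0 ≤ i ≤ m`, `0 ≤ j ≤ n`) form an `F`-basis of `R`. -/
structure IsPmnAlg (R : GradedFAlg F) (u v : R.carrier) (m n : ℕ) : Prop where
  u_mem : u ∈ R.grading 2
  v_mem : v ∈ R.grading 2
  u_pow : u ^ (m + 1) = 0
  v_pow : v ^ (n + 1) = 0
  basis : ∃ b : Module.Basis (Fin (m + 1) × Fin (n + 1)) F R.carrier,
    ∀ p : Fin (m + 1) × Fin (n + 1), b p = u ^ (p.1 : ℕ) * v ^ (p.2 : ℕ)

/-- The deformation `D` of `R = F[u,v]/(u^{m+1}, v^{n+1})` "is" the deformation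
`R̃_{a,b}` with generators `ũ, ṽ, t` of degrees `2, 2, d`, relations `t² = 0`,
`ũ^{m+1} + Σᵢ aᵢ t ũ^{i-d/2} ṽ^{m+1-i} = 0`, `ṽ^{n+1} + Σᵢ bᵢ t ũ^{i-d/2} ṽ^{n+1-i} = 0`,
and `j(ũ) = u`, `j(ṽ) = v`, `j(t) = 0`.  Since `t² = 0`, the relations are
equivalently expressed as `ũ^{m+1} + t·x = 0` for every (any) lift `x` of
`a = Σᵢ aᵢ u^{i-d/2} v^{m+1-i}` under `j`, and similarly for `b`. -/
structure IsRabDef (R : GradedFAlg F) (u v : R.carrier) (m n : ℕ) (d : ℤ)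
    (a b : R.carrier) (D : Deformation F R d) (ut vt : D.alg.carrier) : Prop where
  u_mem : ut ∈ D.alg.grading 2
  v_mem : vt ∈ D.alg.grading 2
  j_u : D.j.toAlgHom ut = u
  j_v : D.j.toAlgHom vt = v
  rel_u : ∀ x : D.alg.carrier, D.j.toAlgHom x = a → ut ^ (m + 1) + D.t * x = 0
  rel_v : ∀ x : D.alg.carrier, D.j.toAlgHom x = b → vt ^ (n + 1) + D.t * x = 0

section Aux

/-- Homogeneous elements of even degree are central. -/
lemma GradedFAlg.central_of_even {A : GradedFAlg F} {i : ℤ} (hi : Even i) {x : A.carrier}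
    (hx : x ∈ A.grading i) (y : A.carrier) : x * y = y * x := by
  refine DirectSum.Decomposition.inductionOn A.grading (motive := fun y => x * y = y * x) ?_ (fun {j} z => ?_) ?_ y
  · simp
  · have hsign : ((-1 : F) ^ (i * j)) = 1 := by
      rw [Even.neg_zpow (hi.mul_right j), one_zpow]
    have h1 := A.gcomm i j x z hx z.2
    have h2 := A.gcomm j i (z : A.carrier) x z.2 hx
    rw [hsign, one_smul] at h1
    exact h1
  · intro y₁ y₂ h₁ h₂
    rw [mul_add, add_mul, h₁, h₂]

/-- Degree-2 homogeneous elements commute. -/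
lemma GradedFAlg.comm22 {A : GradedFAlg F} {x y : A.carrier}
    (hx : x ∈ A.grading 2) (hy : y ∈ A.grading 2) : x * y = y * x := by
  have h := A.gcomm 2 2 x y hx hy
  have hsign : ((-1 : F) ^ ((2 : ℤ) * 2)) = 1 := by
    rw [Even.neg_zpow (by decide), one_zpow]
  rw [hsign, one_smul] at h
  exact h

lemma GradedFAlg.pow_mul_pow_mem {A : GradedFAlg F} {x y : A.carrier}
    (hx : x ∈ A.grading 2) (hy : y ∈ A.grading 2) (i j : ℕ) :
    x ^ i * y ^ j ∈ A.grading (2 * (i : ℤ) + 2 * (j : ℤ)) := by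
  have h := SetLike.mul_mem_graded (SetLike.pow_mem_graded i hx) (SetLike.pow_mem_graded j hy)
  have hidx : (i • (2:ℤ) + j • (2:ℤ)) = 2 * (i : ℤ) + 2 * (j : ℤ) := by
    simp [nsmul_eq_mul]; ring
  rwa [hidx] at h

end Aux

section Tools

variable {R : GradedFAlg F} {u v : R.carrier} {m n : ℕ} {d : ℤ}

/-- Degree of a basis monomial. -/
def dg (p : Fin (m+1) × Fin (n+1)) : ℤ := 2 * ((p.1 : ℕ) : ℤ) + 2 * ((p.2 : ℕ) : ℤ)

variable (bb : Module.Basis (Fin (m+1) × Fin (n+1)) F R.carrier)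

/-- The canonical linear section of `j`. -/
noncomputable def sig (D : Deformation F R d) (ut vt : D.alg.carrier) :
    R.carrier →ₗ[F] D.alg.carrier :=
  bb.constr F fun p => ut ^ (p.1 : ℕ) * vt ^ (p.2 : ℕ)

@[simp] lemma sig_basis (D : Deformation F R d) (ut vt : D.alg.carrier)
    (p : Fin (m+1) × Fin (n+1)) :
    sig bb D ut vt (bb p) = ut ^ (p.1 : ℕ) * vt ^ (p.2 : ℕ) :=
  bb.constr_basis F _ p

lemma j_t (D : Deformation F R d) : D.j.toAlgHom D.t = 0 :=
  (D.j_ker _).mpr ⟨1, (mul_one _).symm⟩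

variable {a b : R.carrier} {D : Deformation F R d} {ut vt : D.alg.carrier}

lemma j_sig (hbb : ∀ p : Fin (m+1) × Fin (n+1), bb p = u ^ (p.1 : ℕ) * v ^ (p.2 : ℕ))
    (h : IsRabDef R u v m n d a b D ut vt) (r : R.carrier) :
    D.j.toAlgHom (sig bb D ut vt r) = r := by
  have key : (D.j.toAlgHom.toLinearMap ∘ₗ sig bb D ut vt) = LinearMap.id := by
    apply bb.ext
    intro p
    simp only [LinearMap.comp_apply, AlgHom.toLinearMap_apply, sig_basis, LinearMap.id_apply]
    rw [map_mul, map_pow, map_pow, h.j_u, h.j_v, hbb p]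
  exact DFunLike.congr_fun key r

lemma sig_one (hbb : ∀ p : Fin (m+1) × Fin (n+1), bb p = u ^ (p.1 : ℕ) * v ^ (p.2 : ℕ)) :
    sig bb D ut vt 1 = 1 := by
  have h00 : bb (0, 0) = 1 := by
    rw [hbb (0, 0)]; simp
  have : (1 : R.carrier) = bb (0, 0) := h00.symm
  rw [this, sig_basis]; simp

lemma t_det {z z' : D.alg.carrier} (hz : D.j.toAlgHom z = D.j.toAlgHom z') :
    D.t * z = D.t * z' := by
  have h0 : D.j.toAlgHom (z - z') = 0 := by rw [map_sub, hz, sub_self]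
  obtain ⟨y, hy⟩ := (D.j_ker _).mp h0
  have : D.t * (z - z') = 0 := by rw [hy, ← mul_assoc, D.t_sq, zero_mul]
  rw [mul_sub] at this
  exact sub_eq_zero.mp this

lemma t_mul_sig (hbb : ∀ p : Fin (m+1) × Fin (n+1), bb p = u ^ (p.1 : ℕ) * v ^ (p.2 : ℕ))
    (h : IsRabDef R u v m n d a b D ut vt) (z : D.alg.carrier) :
    D.t * z = D.t * sig bb D ut vt (D.j.toAlgHom z) :=
  t_det (by rw [j_sig bb hbb h])

lemma mono_mem (hR : IsPmnAlg R u v m n)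
    (hbb : ∀ p : Fin (m+1) × Fin (n+1), bb p = u ^ (p.1 : ℕ) * v ^ (p.2 : ℕ))
    (p : Fin (m+1) × Fin (n+1)) : bb p ∈ R.grading (dg p) := by
  rw [hbb p]
  exact GradedFAlg.pow_mul_pow_mem hR.u_mem hR.v_mem _ _

lemma repr_zero (hR : IsPmnAlg R u v m n)
    (hbb : ∀ p : Fin (m+1) × Fin (n+1), bb p = u ^ (p.1 : ℕ) * v ^ (p.2 : ℕ))
    {k : ℤ} {r : R.carrier} (hr : r ∈ R.grading k)
    {p : Fin (m+1) × Fin (n+1)} (hne : dg p ≠ k) : bb.repr r p = 0 := by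
  classical
  have e1 : GradedRing.proj R.grading (dg p) r = 0 := by
    rw [GradedRing.proj_apply]
    exact DirectSum.decompose_of_mem_ne _ hr (Ne.symm hne)
  have e2 : GradedRing.proj R.grading (dg p) r
      = ∑ q : Fin (m+1) × Fin (n+1), if dg q = dg p then bb.repr r q • bb q else 0 := by
    conv_lhs => rw [← bb.sum_repr r]
    rw [map_sum]
    refine Finset.sum_congr rfl fun q _ => ?_
    by_cases hq : dg q = dg p
    · rw [if_pos hq, GradedRing.proj_apply,
        DirectSum.decompose_of_mem_same _ (hq ▸ Submodule.smul_mem _ _ (mono_mem bb hR hbb q))]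
    · rw [if_neg hq, GradedRing.proj_apply,
        DirectSum.decompose_of_mem_ne _ (Submodule.smul_mem _ _ (mono_mem bb hR hbb q)) hq]
  have e : (∑ q : Fin (m+1) × Fin (n+1), if dg q = dg p then bb.repr r q • bb q else 0)
      = (0 : R.carrier) := e2.symm.trans e1
  have e4 : bb.repr (∑ q : Fin (m+1) × Fin (n+1),
      if dg q = dg p then bb.repr r q • bb q else 0) p = bb.repr r p := by
    rw [map_sum, Finsupp.finset_sum_apply]
    rw [Finset.sum_eq_single p]
    · rw [if_pos rfl, map_smul, bb.repr_self, Finsupp.smul_apply, Finsupp.single_eq_same,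
        smul_eq_mul, mul_one]
    · intro q _ hqp
      by_cases hq : dg q = dg p
      · rw [if_pos hq, map_smul, bb.repr_self, Finsupp.smul_apply, Finsupp.single_apply,
          if_neg hqp, smul_zero]
      · rw [if_neg hq]; simp
    · intro hp; exact absurd (Finset.mem_univ p) hp
  calc bb.repr r p = bb.repr (∑ q : Fin (m+1) × Fin (n+1),
        if dg q = dg p then bb.repr r q • bb q else 0) p := e4.symm
    _ = bb.repr 0 p := by rw [e]
    _ = 0 := by simp

lemma sig_graded (hR : IsPmnAlg R u v m n)
    (hbb : ∀ p : Fin (m+1) × Fin (n+1), bb p = u ^ (p.1 : ℕ) * v ^ (p.2 : ℕ))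
    (h : IsRabDef R u v m n d a b D ut vt)
    {k : ℤ} {r : R.carrier} (hr : r ∈ R.grading k) :
    sig bb D ut vt r ∈ D.alg.grading k := by
  classical
  rw [← bb.sum_repr r, map_sum]
  refine Submodule.sum_mem _ fun q _ => ?_
  rw [map_smul, sig_basis]
  by_cases hq : dg q = k
  · exact Submodule.smul_mem _ _ (hq ▸ GradedFAlg.pow_mul_pow_mem h.u_mem h.v_mem _ _)
  · rw [repr_zero bb hR hbb hr hq, zero_smul]
    exact Submodule.zero_mem _

lemma neg_grading (hR : IsPmnAlg R u v m n)
    (hbb : ∀ p : Fin (m+1) × Fin (n+1), bb p = u ^ (p.1 : ℕ) * v ^ (p.2 : ℕ))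
    {k : ℤ} (hk : k < 0) {x : R.carrier} (hx : x ∈ R.grading k) : x = 0 := by
  classical
  have e0 : GradedRing.proj R.grading k x = x := by
    rw [GradedRing.proj_apply]
    exact DirectSum.decompose_of_mem_same _ hx
  rw [← e0]
  conv_lhs => rw [← bb.sum_repr x]
  rw [map_sum]
  refine Finset.sum_eq_zero fun q _ => ?_
  rw [GradedRing.proj_apply]
  refine DirectSum.decompose_of_mem_ne _ (Submodule.smul_mem _ _ (mono_mem bb hR hbb q)) ?_
  have h1 : (0:ℤ) ≤ ((q.1 : ℕ) : ℤ) := Int.natCast_nonneg _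
  have h2 : (0:ℤ) ≤ ((q.2 : ℕ) : ℤ) := Int.natCast_nonneg _
  unfold dg
  omega

lemma t_sig_inv (hR : IsPmnAlg R u v m n)
    (hbb : ∀ p : Fin (m+1) × Fin (n+1), bb p = u ^ (p.1 : ℕ) * v ^ (p.2 : ℕ))
    (h : IsRabDef R u v m n d a b D ut vt)
    {k : ℤ} {p : R.carrier}
    (hmem : D.t * sig bb D ut vt p ∈ D.alg.grading k) : p ∈ R.grading (k - d) := by
  classical
  set P := DirectSum.decompose R.grading p with hP
  set q : R.carrier := ↑(P (k - d)) with hq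
  have hqmem : q ∈ R.grading (k - d) := (P (k - d)).2
  suffices hpq : p = q by rw [hpq]; exact hqmem
  have h1 : D.t * sig bb D ut vt q ∈ D.alg.grading k := by
    have hmm := SetLike.mul_mem_graded D.t_mem (sig_graded bb hR hbb h hqmem)
    have hdk : d + (k - d) = k := by ring
    rwa [hdk] at hmm
  have hz' : D.t * sig bb D ut vt (p - q) ∈ D.alg.grading k := by
    rw [map_sub, mul_sub]
    exact Submodule.sub_mem _ hmem h1
  have hrepr : p - q = ∑ i ∈ P.support.erase (k - d), ↑(P i) := by
    by_cases hks : (k - d) ∈ P.support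
    · rw [Finset.sum_erase_eq_sub hks]
      congr 1
      exact (DirectSum.sum_support_decompose R.grading p).symm
    · rw [Finset.erase_eq_of_notMem hks]
      have hq0 : q = 0 := by
        rw [hq]
        rw [DFinsupp.notMem_support_iff.mp hks]
        rfl
      rw [hq0, sub_zero]
      exact (DirectSum.sum_support_decompose R.grading p).symm
  have hzsum : D.t * sig bb D ut vt (p - q)
      = ∑ i ∈ P.support.erase (k - d), D.t * sig bb D ut vt ↑(P i) := by
    rw [hrepr, map_sum, Finset.mul_sum]
  have hz0 : D.t * sig bb D ut vt (p - q) = 0 := by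
    have hsame : GradedRing.proj D.alg.grading k (D.t * sig bb D ut vt (p - q))
        = D.t * sig bb D ut vt (p - q) := by
      rw [GradedRing.proj_apply]
      exact DirectSum.decompose_of_mem_same _ hz'
    rw [← hsame, hzsum, map_sum]
    refine Finset.sum_eq_zero fun i hi => ?_
    have hine : i ≠ k - d := Finset.ne_of_mem_erase hi
    have hterm : D.t * sig bb D ut vt ↑(P i) ∈ D.alg.grading (d + i) :=
      SetLike.mul_mem_graded D.t_mem (sig_graded bb hR hbb h (P i).2)
    rw [GradedRing.proj_apply]
    refine DirectSum.decompose_of_mem_ne _ hterm (by omega)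
  obtain ⟨y, hy⟩ := (D.t_ann _).mp hz0
  have : p - q = 0 := by
    have := congrArg D.j.toAlgHom hy
    rwa [j_sig bb hbb h, map_mul, j_t, zero_mul] at this
  rw [sub_eq_zero] at this
  exact this

/-- The linear parametrization of the deformation algebra. -/
noncomputable def psi (D : Deformation F R d) (ut vt : D.alg.carrier) :
    R.carrier × R.carrier →ₗ[F] D.alg.carrier :=
  (sig bb D ut vt).comp (LinearMap.fst F _ _)
    + (LinearMap.mulLeft F D.t).comp ((sig bb D ut vt).comp (LinearMap.snd F _ _))

@[simp] lemma psi_apply (D : Deformation F R d) (ut vt : D.alg.carrier) (r p : R.carrier) :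
    psi bb D ut vt (r, p) = sig bb D ut vt r + D.t * sig bb D ut vt p := rfl

lemma j_psi (hbb : ∀ p : Fin (m+1) × Fin (n+1), bb p = u ^ (p.1 : ℕ) * v ^ (p.2 : ℕ))
    (h : IsRabDef R u v m n d a b D ut vt) (r p : R.carrier) :
    D.j.toAlgHom (psi bb D ut vt (r, p)) = r := by
  rw [psi_apply, map_add, map_mul, j_t, zero_mul, add_zero, j_sig bb hbb h]

lemma psi_bij (hbb : ∀ p : Fin (m+1) × Fin (n+1), bb p = u ^ (p.1 : ℕ) * v ^ (p.2 : ℕ))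
    (h : IsRabDef R u v m n d a b D ut vt) :
    Function.Bijective (psi bb D ut vt) := by
  have key : ∀ z : R.carrier × R.carrier, psi bb D ut vt z = 0 → z = 0 := by
    rintro ⟨r, p⟩ hz
    have hr : r = 0 := by
      have := congrArg D.j.toAlgHom hz
      rwa [j_psi bb hbb h, map_zero] at this
    subst hr
    have hp0 : D.t * sig bb D ut vt p = 0 := by
      simpa using hz
    obtain ⟨y, hy⟩ := (D.t_ann _).mp hp0
    have hp : p = 0 := by
      have := congrArg D.j.toAlgHom hy
      rwa [j_sig bb hbb h, map_mul, j_t, zero_mul] at this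
    simp [hp]
  constructor
  · intro x y hxy
    have := key (x - y) (by rw [map_sub, hxy, sub_self])
    exact sub_eq_zero.mp this
  · intro x
    obtain ⟨y, hy⟩ := (D.j_ker (x - sig bb D ut vt (D.j.toAlgHom x))).mp
      (by rw [map_sub, j_sig bb hbb h, sub_self])
    refine ⟨(D.j.toAlgHom x, D.j.toAlgHom y), ?_⟩
    rw [psi_apply, ← t_mul_sig bb hbb h y, ← hy]
    abel

lemma psi_mul (heven : Even d)
    (hbb : ∀ p : Fin (m+1) × Fin (n+1), bb p = u ^ (p.1 : ℕ) * v ^ (p.2 : ℕ))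
    (h : IsRabDef R u v m n d a b D ut vt) (r p r' p' : R.carrier) :
    psi bb D ut vt (r, p) * psi bb D ut vt (r', p') =
      sig bb D ut vt r * sig bb D ut vt r' + psi bb D ut vt (0, r * p' + p * r') := by
  have tc : ∀ y : D.alg.carrier, y * D.t = D.t * y :=
    fun y => (GradedFAlg.central_of_even heven D.t_mem y).symm
  set σ := sig bb D ut vt with hσ
  have e1 : σ r * (D.t * σ p') = D.t * σ (r * p') := by
    rw [← mul_assoc, tc (σ r), mul_assoc, t_mul_sig bb hbb h (σ r * σ p'),
      map_mul, j_sig bb hbb h, j_sig bb hbb h]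
  have e2 : (D.t * σ p) * σ r' = D.t * σ (p * r') := by
    rw [mul_assoc, t_mul_sig bb hbb h (σ p * σ r'), map_mul, j_sig bb hbb h, j_sig bb hbb h]
  have e3 : (D.t * σ p) * (D.t * σ p') = 0 := by
    rw [mul_assoc, ← mul_assoc (σ p), tc (σ p), ← mul_assoc, ← mul_assoc, D.t_sq,
      zero_mul, zero_mul]
  rw [psi_apply, psi_apply, psi_apply, add_mul, mul_add, mul_add, e1, e2, e3, add_zero,
    map_zero, zero_add, map_add, mul_add]
  abel

lemma ut_pow (hbb : ∀ p : Fin (m+1) × Fin (n+1), bb p = u ^ (p.1 : ℕ) * v ^ (p.2 : ℕ))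
    (h : IsRabDef R u v m n d a b D ut vt) :
    ut ^ (m + 1) = -(D.t * sig bb D ut vt a) :=
  eq_neg_of_add_eq_zero_left (h.rel_u _ (j_sig bb hbb h a))

lemma vt_pow (hbb : ∀ p : Fin (m+1) × Fin (n+1), bb p = u ^ (p.1 : ℕ) * v ^ (p.2 : ℕ))
    (h : IsRabDef R u v m n d a b D ut vt) :
    vt ^ (n + 1) = -(D.t * sig bb D ut vt b) :=
  eq_neg_of_add_eq_zero_left (h.rel_v _ (j_sig bb hbb h b))

lemma mono_reduce_u (heven : Even d)
    (hbb : ∀ p : Fin (m+1) × Fin (n+1), bb p = u ^ (p.1 : ℕ) * v ^ (p.2 : ℕ))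
    (h : IsRabDef R u v m n d a b D ut vt) (c Q : ℕ) :
    ut ^ (m + 1 + c) * vt ^ Q = psi bb D ut vt (0, -(a * (u ^ c * v ^ Q))) := by
  have hj : D.j.toAlgHom (sig bb D ut vt a * (ut ^ c * vt ^ Q)) = a * (u ^ c * v ^ Q) := by
    rw [map_mul, map_mul, map_pow, map_pow, j_sig bb hbb h, h.j_u, h.j_v]
  rw [pow_add, ut_pow bb hbb h, psi_apply, map_zero, zero_add, map_neg, mul_neg,
    neg_mul, neg_mul, neg_inj, mul_assoc, mul_assoc,
    t_mul_sig bb hbb h (sig bb D ut vt a * (ut ^ c * vt ^ Q)), hj]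

lemma mono_reduce_v (heven : Even d)
    (hbb : ∀ p : Fin (m+1) × Fin (n+1), bb p = u ^ (p.1 : ℕ) * v ^ (p.2 : ℕ))
    (h : IsRabDef R u v m n d a b D ut vt) (P c : ℕ) :
    ut ^ P * vt ^ (n + 1 + c) = psi bb D ut vt (0, -(u ^ P * (b * v ^ c))) := by
  have tc : ∀ y : D.alg.carrier, y * D.t = D.t * y :=
    fun y => (GradedFAlg.central_of_even heven D.t_mem y).symm
  have hcomm : ∀ x z : D.alg.carrier, x * (D.t * z) = D.t * (x * z) := fun x z => by
    rw [← mul_assoc, tc x, mul_assoc]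
  have hj : D.j.toAlgHom (ut ^ P * (sig bb D ut vt b * vt ^ c)) = u ^ P * (b * v ^ c) := by
    rw [map_mul, map_mul, map_pow, map_pow, j_sig bb hbb h, h.j_u, h.j_v]
  rw [pow_add, vt_pow bb hbb h, psi_apply, map_zero, zero_add, map_neg, mul_neg,
    neg_mul, mul_neg, neg_inj, mul_assoc D.t (sig bb D ut vt b) (vt ^ c),
    hcomm (ut ^ P) (sig bb D ut vt b * vt ^ c),
    t_mul_sig bb hbb h (ut ^ P * (sig bb D ut vt b * vt ^ c)), hj]

lemma eq_of_morphism (hR : IsPmnAlg R u v m n)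
    (hbb : ∀ p : Fin (m+1) × Fin (n+1), bb p = u ^ (p.1 : ℕ) * v ^ (p.2 : ℕ))
    (hd4 : 4 ≤ d)
    {a' b' : R.carrier} {D' : Deformation F R d} {ut' vt' : D'.alg.carrier}
    (h : IsRabDef R u v m n d a b D ut vt) (h' : IsRabDef R u v m n d a' b' D' ut' vt')
    (φm : DefMorphismOver (GradedFAlg.Hom.id R) D D') : a = a' ∧ b = b' := by
  set φ := φm.toHom.toAlgHom with hφdef
  have hjφ : ∀ x, D'.j.toAlgHom (φ x) = D.j.toAlgHom x := fun x => φm.over_id x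
  have key : ∀ (w : D.alg.carrier) (w' : D'.alg.carrier), w ∈ D.alg.grading 2 →
      w' ∈ D'.alg.grading 2 → D.j.toAlgHom w = D'.j.toAlgHom w' → φ w = w' := by
    intro w w' hw hw' hjw
    have hker : D'.j.toAlgHom (φ w - w') = 0 := by rw [map_sub, hjφ, hjw, sub_self]
    obtain ⟨c, hc⟩ := (D'.j_ker _).mp hker
    have hc2 : φ w - w' = D'.t * sig bb D' ut' vt' (D'.j.toAlgHom c) := by
      rw [hc]; exact t_mul_sig bb hbb h' c
    have hmem2 : φ w - w' ∈ D'.alg.grading 2 :=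
      Submodule.sub_mem _ (φm.toHom.graded 2 w hw) hw'
    rw [hc2] at hmem2
    have hneg : D'.j.toAlgHom c ∈ R.grading (2 - d) := t_sig_inv bb hR hbb h' hmem2
    have hz : D'.j.toAlgHom c = 0 := neg_grading bb hR hbb (by omega) hneg
    have hfin : φ w - w' = 0 := by rw [hc2, hz, map_zero, mul_zero]
    exact sub_eq_zero.mp hfin
  have hut : φ ut = ut' := key ut ut' h.u_mem h'.u_mem (by rw [h.j_u, h'.j_u])
  have hvt : φ vt = vt' := key vt vt' h.v_mem h'.v_mem (by rw [h.j_v, h'.j_v])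
  constructor
  · have hrel := congrArg φ (h.rel_u _ (j_sig bb hbb h a))
    rw [map_add, map_pow, map_mul, map_zero, hut, φm.map_t] at hrel
    rw [ut_pow bb hbb h', neg_add_eq_zero] at hrel
    have h0 : D'.t * (φ (sig bb D ut vt a) - sig bb D' ut' vt' a') = 0 := by
      rw [mul_sub, hrel, sub_self]
    obtain ⟨y, hy⟩ := (D'.t_ann _).mp h0
    have hfin := congrArg D'.j.toAlgHom hy
    rw [map_sub, hjφ, j_sig bb hbb h, j_sig bb hbb h', map_mul, j_t, zero_mul] at hfin
    exact sub_eq_zero.mp hfin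
  · have hrel := congrArg φ (h.rel_v _ (j_sig bb hbb h b))
    rw [map_add, map_pow, map_mul, map_zero, hvt, φm.map_t] at hrel
    rw [vt_pow bb hbb h', neg_add_eq_zero] at hrel
    have h0 : D'.t * (φ (sig bb D ut vt b) - sig bb D' ut' vt' b') = 0 := by
      rw [mul_sub, hrel, sub_self]
    obtain ⟨y, hy⟩ := (D'.t_ann _).mp h0
    have hfin := congrArg D'.j.toAlgHom hy
    rw [map_sub, hjφ, j_sig bb hbb h, j_sig bb hbb h', map_mul, j_t, zero_mul] at hfin
    exact sub_eq_zero.mp hfin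

lemma iso_of_eq (heven : Even d) (hR : IsPmnAlg R u v m n)
    (hbb : ∀ p : Fin (m+1) × Fin (n+1), bb p = u ^ (p.1 : ℕ) * v ^ (p.2 : ℕ))
    {D' : Deformation F R d} {ut' vt' : D'.alg.carrier}
    (h : IsRabDef R u v m n d a b D ut vt) (h' : IsRabDef R u v m n d a b D' ut' vt') :
    Deformation.Iso D D' := by
  classical
  have hψ := psi_bij bb hbb h
  have hψ' := psi_bij bb hbb h'
  let e : D.alg.carrier ≃ₗ[F] R.carrier × R.carrier := (LinearEquiv.ofBijective _ hψ).symm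
  let φ : D.alg.carrier →ₗ[F] D'.alg.carrier :=
    (psi bb D' ut' vt') ∘ₗ (e : D.alg.carrier →ₗ[F] R.carrier × R.carrier)
  have hφψ : ∀ z, φ (psi bb D ut vt z) = psi bb D' ut' vt' z := by
    intro z
    have h1 : e (psi bb D ut vt z) = z :=
      (LinearEquiv.ofBijective _ hψ).symm_apply_apply z
    show psi bb D' ut' vt' (e (psi bb D ut vt z)) = _
    rw [h1]
  have hsurj : ∀ x : D.alg.carrier, ∃ z, x = psi bb D ut vt z :=
    fun x => (hψ.2 x).imp fun z hz => hz.symm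
  have hmono : ∀ P Q : ℕ, φ (ut ^ P * vt ^ Q) = ut' ^ P * vt' ^ Q := by
    intro P Q
    rcases Nat.lt_or_ge P (m+1) with hP | hP
    · rcases Nat.lt_or_ge Q (n+1) with hQ | hQ
      · have h2 : ut ^ P * vt ^ Q = psi bb D ut vt (bb (⟨P, hP⟩, ⟨Q, hQ⟩), 0) := by
          simp [psi_apply, sig_basis]
        have h3 : psi bb D' ut' vt' (bb (⟨P, hP⟩, ⟨Q, hQ⟩), 0) = ut' ^ P * vt' ^ Q := by
          simp [psi_apply, sig_basis]
        rw [h2, hφψ, h3]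
      · obtain ⟨c, rfl⟩ : ∃ c, Q = n + 1 + c := ⟨Q - (n+1), by omega⟩
        rw [mono_reduce_v bb heven hbb h P c, hφψ, ← mono_reduce_v bb heven hbb h' P c]
    · obtain ⟨c, rfl⟩ : ∃ c, P = m + 1 + c := ⟨P - (m+1), by omega⟩
      rw [mono_reduce_u bb heven hbb h c Q, hφψ, ← mono_reduce_u bb heven hbb h' c Q]
  have hkey : ∀ r r', φ (sig bb D ut vt r * sig bb D ut vt r')
      = sig bb D' ut' vt' r * sig bb D' ut' vt' r' := by
    have hB : (LinearMap.compr₂ (LinearMap.compl₁₂ (LinearMap.mul F D.alg.carrier)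
          (sig bb D ut vt) (sig bb D ut vt)) φ)
        = LinearMap.compl₁₂ (LinearMap.mul F D'.alg.carrier)
          (sig bb D' ut' vt') (sig bb D' ut' vt') := by
      apply bb.ext; intro p; apply bb.ext; intro q
      simp only [LinearMap.compr₂_apply, LinearMap.compl₁₂_apply, LinearMap.mul_apply',
        sig_basis]
      have hc : Commute ((vt : D.alg.carrier) ^ (p.2 : ℕ)) (ut ^ (q.1 : ℕ)) :=
        Commute.pow_pow (show Commute vt ut from GradedFAlg.comm22 h.v_mem h.u_mem) _ _
      have hc' : Commute ((vt' : D'.alg.carrier) ^ (p.2 : ℕ)) (ut' ^ (q.1 : ℕ)) :=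
        Commute.pow_pow (show Commute vt' ut' from GradedFAlg.comm22 h'.v_mem h'.u_mem) _ _
      have hL : (ut ^ (p.1 : ℕ) * vt ^ (p.2 : ℕ)) * (ut ^ (q.1 : ℕ) * vt ^ (q.2 : ℕ))
          = ut ^ ((p.1 : ℕ) + (q.1 : ℕ)) * vt ^ ((p.2 : ℕ) + (q.2 : ℕ)) := by
        rw [pow_add, pow_add]
        exact Commute.mul_mul_mul_comm hc _ _
      have hL' : (ut' ^ (p.1 : ℕ) * vt' ^ (p.2 : ℕ)) * (ut' ^ (q.1 : ℕ) * vt' ^ (q.2 : ℕ))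
          = ut' ^ ((p.1 : ℕ) + (q.1 : ℕ)) * vt' ^ ((p.2 : ℕ) + (q.2 : ℕ)) := by
        rw [pow_add, pow_add]
        exact Commute.mul_mul_mul_comm hc' _ _
      rw [hL, hmono, hL']
    intro r r'
    exact DFunLike.congr_fun (DFunLike.congr_fun hB r) r'
  have hone : φ 1 = 1 := by
    have h1 : (1 : D.alg.carrier) = psi bb D ut vt (1, 0) := by
      rw [psi_apply, map_zero, mul_zero, add_zero, sig_one bb hbb]
    rw [h1, hφψ, psi_apply, map_zero, mul_zero, add_zero, sig_one bb hbb]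
  have hmul : ∀ x y, φ (x * y) = φ x * φ y := by
    intro x y
    obtain ⟨⟨r, p⟩, rfl⟩ := hsurj x
    obtain ⟨⟨r', p'⟩, rfl⟩ := hsurj y
    rw [psi_mul bb heven hbb h, map_add]
    simp only [hφψ]
    rw [psi_mul bb heven hbb h', hkey]
  have hgr : ∀ (i : ℤ) (x : D.alg.carrier), x ∈ D.alg.grading i → φ x ∈ D'.alg.grading i := by
    intro k x hx
    obtain ⟨⟨r, p⟩, rfl⟩ := hsurj x
    have hr : r ∈ R.grading k := by
      have hg := D.j.graded k _ hx
      rwa [j_psi bb hbb h] at hg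
    have htp : D.t * sig bb D ut vt p ∈ D.alg.grading k := by
      have hsub := Submodule.sub_mem _ hx (sig_graded bb hR hbb h hr)
      rwa [psi_apply, add_sub_cancel_left] at hsub
    have hp : p ∈ R.grading (k - d) := t_sig_inv bb hR hbb h htp
    rw [hφψ, psi_apply]
    refine Submodule.add_mem _ (sig_graded bb hR hbb h' hr) ?_
    have hmm := SetLike.mul_mem_graded D'.t_mem (sig_graded bb hR hbb h' hp)
    have hdk : d + (k - d) = k := by ring
    rwa [hdk] at hmm
  have hmapt : φ D.t = D'.t := by
    have h1 : D.t = psi bb D ut vt (0, 1) := by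
      rw [psi_apply, map_zero, zero_add, sig_one bb hbb, mul_one]
    rw [h1, hφψ, psi_apply, map_zero, zero_add, sig_one bb hbb, mul_one]
  refine ⟨⟨⟨AlgHom.ofLinearMap φ hone hmul, hgr⟩, hmapt, ?_⟩, ?_⟩
  · intro x
    obtain ⟨⟨r, p⟩, rfl⟩ := hsurj x
    show D'.j.toAlgHom (φ (psi bb D ut vt (r, p))) = _
    rw [hφψ, j_psi bb hbb h', j_psi bb hbb h]
    rfl
  · show Function.Bijective φ
    exact hψ'.comp e.bijective

end Tools

/-- Let `R = F[u,v]/(u^{m+1}, v^{n+1})` with `m, n ≥ 1` and let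
`d ≥ 4` be even. For `(a, b), (a', b') ∈ R^{2m+2−d} ⊕ R^{2n+2−d}`, the
deformations `(R̃_{a,b}, t, j)` and `(R̃_{a',b'}, t, j)` of `R` are isomorphic
as deformations of `R` if and only if `(a, b) = (a', b')`. -/
theorem Rab_iso_iff_eq
    {F : Type} [Field F] (R : GradedFAlg F) (u v : R.carrier) (m n : ℕ)
    (hm : 1 ≤ m) (hn : 1 ≤ n) (hR : IsPmnAlg R u v m n)
    (d : ℤ) (hd4 : 4 ≤ d) (heven : Even d)
    (a b a' b' : R.carrier)
    (ha : a ∈ R.grading (2 * (m : ℤ) + 2 - d)) (hb : b ∈ R.grading (2 * (n : ℤ) + 2 - d))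
    (ha' : a' ∈ R.grading (2 * (m : ℤ) + 2 - d)) (hb' : b' ∈ R.grading (2 * (n : ℤ) + 2 - d))
    (D D' : Deformation F R d) (ut vt : D.alg.carrier) (ut' vt' : D'.alg.carrier)
    (h : IsRabDef R u v m n d a b D ut vt) (h' : IsRabDef R u v m n d a' b' D' ut' vt') :
    Deformation.Iso D D' ↔ (a = a' ∧ b = b') := by
  obtain ⟨bb, hbb⟩ := hR.basis
  constructor
  · intro hiso
    unfold Deformation.Iso at hiso
    obtain ⟨φm, -⟩ := hiso
    exact eq_of_morphism bb hR hbb hd4 h h' φm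
  · rintro ⟨rfl, rfl⟩
    exact iso_of_eq bb heven hR hbb h h'
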